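/- There exists a constant C > 0 such that for every real sequence a ∈ ℓ^{p₀}(ℤ) for some 1 ≤ p₀ < ∞, every γ > 0 and every λ > 0, the cardinality of {n ∈ ℤ : M_d a(n) > 2λ and M^# a(n) ≤ γλ} is at most C·γ times the cardinality of {n ∈ ℤ : M_d a(n) > λ} (good-λ inequality relating the dyadic and sharp maximal operators). -/

import Mathlib

open scoped ENNReal
open MeasureTheory

/-- An interval in ℤ: a nonempty finite set of consecutive integers. -/
def IsIntervalZ (I : Finset ℤ) : Prop := ∃ n m : ℤ, n ≤ m ∧ I = Finset.Icc n m

/-- The dyadic interval I_{N,j} = {(j-1)2^N + 1, …, j·2^N}. -/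
noncomputable def dyadicI (N : ℕ) (j : ℤ) : Finset ℤ := Finset.Icc ((j - 1) * 2 ^ N + 1) (j * 2 ^ N)

/-- A dyadic interval is one of the form I_{N,j} with N a positive integer. -/
def IsDyadicZ (I : Finset ℤ) : Prop := ∃ N : ℕ, 0 < N ∧ ∃ j : ℤ, I = dyadicI N j

/-- The (uncentered) Hardy–Littlewood maximal operator. -/
noncomputable def Mop (a : ℤ → ℝ) (m : ℤ) : ℝ≥0∞ :=
  ⨆ (I : Finset ℤ) (_ : IsIntervalZ I) (_ : m ∈ I),
    (∑ n ∈ I, ENNReal.ofReal |a n|) / I.card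

/-- The centered Hardy–Littlewood maximal operator
`M′a(m) = sup_{r>0} (1/(2r)) ∑_{n=-r}^{r} |a(m-n)|`. -/
noncomputable def Mc (a : ℤ → ℝ) (m : ℤ) : ℝ≥0∞ :=
  ⨆ (r : ℕ) (_ : 0 < r),
    (∑ n ∈ Finset.Icc (-(r : ℤ)) (r : ℤ), ENNReal.ofReal |a (m - n)|) / (2 * (r : ℝ≥0∞))

/-- The dyadic maximal operator. -/
noncomputable def Md (a : ℤ → ℝ) (m : ℤ) : ℝ≥0∞ :=
  ⨆ (I : Finset ℤ) (_ : IsDyadicZ I) (_ : m ∈ I),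
    (∑ k ∈ I, ENNReal.ofReal |a k|) / I.card

/-- The average `a_I` of a sequence on a finite set. -/
noncomputable def avgI (a : ℤ → ℝ) (I : Finset ℤ) : ℝ := (∑ m ∈ I, a m) / I.card

/-- The sharp maximal operator. -/
noncomputable def Msharp (a : ℤ → ℝ) (m : ℤ) : ℝ≥0∞ :=
  ⨆ (I : Finset ℤ) (_ : IsIntervalZ I) (_ : m ∈ I),
    (∑ n ∈ I, ENNReal.ofReal |a n - avgI a I|) / I.card

attribute [local instance 0] Classical.propDecidable

lemma mem_dyadicI {N : ℕ} {j m : ℤ} :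
    m ∈ dyadicI N j ↔ (j - 1) * 2 ^ N + 1 ≤ m ∧ m ≤ j * 2 ^ N := Finset.mem_Icc

lemma dyadicI_card (N : ℕ) (j : ℤ) : (dyadicI N j).card = 2 ^ N := by
  rw [dyadicI, Int.card_Icc]
  have : j * 2 ^ N + 1 - ((j - 1) * 2 ^ N + 1) = ((2 ^ N : ℕ) : ℤ) := by push_cast; ring
  rw [this, Int.toNat_natCast]

lemma dyadicI_nonempty (N : ℕ) (j : ℤ) : (dyadicI N j).Nonempty := by
  refine ⟨j * 2 ^ N, mem_dyadicI.2 ⟨?_, le_refl _⟩⟩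
  nlinarith [pow_pos (by norm_num : (0:ℤ) < 2) N]

lemma dyadicI_isInterval (N : ℕ) (j : ℤ) : IsIntervalZ (dyadicI N j) := by
  refine ⟨(j - 1) * 2 ^ N + 1, j * 2 ^ N, ?_, rfl⟩
  nlinarith [pow_pos (by norm_num : (0:ℤ) < 2) N]

/-- existence of a dyadic interval at any level containing n -/
lemma mem_dyadicI_blk (N : ℕ) (n : ℤ) : n ∈ dyadicI N ((n - 1) / 2 ^ N + 1) := by
  have hp : (0:ℤ) < 2 ^ N := pow_pos (by norm_num) N
  have h1 := Int.mul_ediv_add_emod (n - 1) (2 ^ N)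
  have h2 := Int.emod_nonneg (n - 1) (ne_of_gt hp)
  have h3 := Int.emod_lt_of_pos (n - 1) hp
  rw [mem_dyadicI]
  constructor <;> nlinarith

/-- dyadic intervals at the same level sharing a point coincide -/
lemma dyadicI_eq_of_mem {N : ℕ} {j j' m : ℤ} (h : m ∈ dyadicI N j) (h' : m ∈ dyadicI N j') :
    j = j' := by
  rw [mem_dyadicI] at h h'
  have hp : (0:ℤ) < 2 ^ N := pow_pos (by norm_num) N
  have h1 : j - 1 < j' := by nlinarith
  have h2 : j' - 1 < j := by nlinarith
  omega

/-- nesting -/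
lemma dyadicI_subset {N N' : ℕ} {j j' m : ℤ} (hNN : N ≤ N')
    (h : m ∈ dyadicI N j) (h' : m ∈ dyadicI N' j') : dyadicI N j ⊆ dyadicI N' j' := by
  rw [mem_dyadicI] at h h'
  have hp : (0:ℤ) < 2 ^ N := pow_pos (by norm_num) N
  have ht : (2:ℤ) ^ N' = 2 ^ (N' - N) * 2 ^ N := by
    rw [← pow_add]; congr 1; omega
  set t : ℤ := 2 ^ (N' - N) with htdef
  rw [ht] at h'
  have hlo : (j' - 1) * (t * 2 ^ N) ≤ (j - 1) * 2 ^ N := by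
    have : (j' - 1) * t < j := by nlinarith
    have : (j' - 1) * t ≤ j - 1 := by omega
    calc (j' - 1) * (t * 2 ^ N) = ((j' - 1) * t) * 2 ^ N := by ring
    _ ≤ (j - 1) * 2 ^ N := by nlinarith
  have hhi : j * 2 ^ N ≤ j' * (t * 2 ^ N) := by
    have h5 : j - 1 < j' * t := by nlinarith
    have h6 : j ≤ j' * t := by omega
    calc j * 2 ^ N ≤ (j' * t) * 2 ^ N := by nlinarith
    _ = j' * (t * 2 ^ N) := by ring
  intro k hk
  rw [mem_dyadicI] at hk ⊢
  rw [ht]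
  omega
open scoped ENNReal

lemma sum_ofReal_abs (a : ℤ → ℝ) (I : Finset ℤ) :
    (∑ n ∈ I, ENNReal.ofReal |a n|) = ENNReal.ofReal (∑ n ∈ I, |a n|) :=
  (ENNReal.ofReal_sum_of_nonneg (fun n _ => abs_nonneg _)).symm

lemma avg_lt_iff (a : ℤ → ℝ) (I : Finset ℤ) (hI : I.Nonempty) {t : ℝ} (ht : 0 ≤ t) :
    ENNReal.ofReal t < (∑ n ∈ I, ENNReal.ofReal |a n|) / I.card ↔
      t * I.card < ∑ n ∈ I, |a n| := by
  have hc0 : (I.card : ℝ≥0∞) ≠ 0 := by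
    simp [Finset.card_ne_zero_of_mem hI.choose_spec]
  have hct : (I.card : ℝ≥0∞) ≠ ⊤ := ENNReal.natCast_ne_top _
  rw [sum_ofReal_abs, ENNReal.lt_div_iff_mul_lt (Or.inl hc0) (Or.inl hct)]
  rw [show ((I.card : ℝ≥0∞)) = ENNReal.ofReal (I.card : ℝ) by simp [ENNReal.ofReal_natCast],
    ← ENNReal.ofReal_mul ht]
  exact ENNReal.ofReal_lt_ofReal_iff_of_nonneg (by positivity)

lemma avg_le_of {a : ℤ → ℝ} {f : ℤ → ℝ} {I : Finset ℤ} (hI : I.Nonempty) {s : ℝ} (hs : 0 ≤ s)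
    (h : (∑ n ∈ I, ENNReal.ofReal |f n|) / I.card ≤ ENNReal.ofReal s) :
    ∑ n ∈ I, |f n| ≤ s * I.card := by
  have hc0 : (I.card : ℝ≥0∞) ≠ 0 := by
    simp [Finset.card_ne_zero_of_mem hI.choose_spec]
  have hct : (I.card : ℝ≥0∞) ≠ ⊤ := ENNReal.natCast_ne_top _
  rw [sum_ofReal_abs, ENNReal.div_le_iff_le_mul (Or.inl hc0) (Or.inl hct)] at h
  rw [show ((I.card : ℝ≥0∞)) = ENNReal.ofReal (I.card : ℝ) by simp [ENNReal.ofReal_natCast],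
    ← ENNReal.ofReal_mul hs] at h
  exact (ENNReal.ofReal_le_ofReal_iff (by positivity)).1 h


lemma card_real (N : ℕ) (j : ℤ) : ((dyadicI N j).card : ℝ) = 2 ^ N := by
  rw [dyadicI_card]; push_cast; ring

lemma Md_gt_of {a : ℤ → ℝ} {n : ℤ} {t : ℝ} (ht : 0 ≤ t) {N : ℕ} {j : ℤ} (hN : 0 < N)
    (hmem : n ∈ dyadicI N j) (h : t * 2 ^ N < ∑ k ∈ dyadicI N j, |a k|) :
    ENNReal.ofReal t < Md a n := by
  have h1 : ENNReal.ofReal t <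
      (∑ k ∈ dyadicI N j, ENNReal.ofReal |a k|) / (dyadicI N j).card := by
    rw [avg_lt_iff a _ (dyadicI_nonempty N j) ht, card_real]; exact h
  refine h1.trans_le ?_
  exact le_iSup_of_le (dyadicI N j) (le_iSup_of_le ⟨N, hN, j, rfl⟩ (le_iSup_of_le hmem le_rfl))

lemma Md_gt_iff (a : ℤ → ℝ) (n : ℤ) {t : ℝ} (ht : 0 ≤ t) :
    ENNReal.ofReal t < Md a n ↔
      ∃ N j, 0 < N ∧ n ∈ dyadicI N j ∧ t * 2 ^ N < ∑ k ∈ dyadicI N j, |a k| := by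
  constructor
  · intro h
    rw [Md] at h
    simp only [lt_iSup_iff] at h
    obtain ⟨I, ⟨N, hN, j, rfl⟩, hmem, hlt⟩ := h
    refine ⟨N, j, hN, hmem, ?_⟩
    rw [avg_lt_iff a _ (dyadicI_nonempty N j) ht, card_real] at hlt
    exact hlt
  · rintro ⟨N, j, hN, hmem, h⟩
    exact Md_gt_of ht hN hmem h

lemma Msharp_bound {a : ℤ → ℝ} {n : ℤ} {I : Finset ℤ} (hI : IsIntervalZ I) (hmem : n ∈ I)
    {s : ℝ} (hs : 0 ≤ s) (h : Msharp a n ≤ ENNReal.ofReal s) :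
    ∑ k ∈ I, |a k - avgI a I| ≤ s * I.card := by
  have h1 : (∑ k ∈ I, ENNReal.ofReal |a k - avgI a I|) / I.card ≤ Msharp a n :=
    le_iSup_of_le I (le_iSup_of_le hI (le_iSup_of_le hmem le_rfl))
  exact avg_le_of (a := a) ⟨n, hmem⟩ hs (h1.trans h)

section Core

def blk (N : ℕ) (n : ℤ) : ℤ := (n - 1) / 2 ^ N + 1

lemma mem_blk (N : ℕ) (n : ℤ) : n ∈ dyadicI N (blk N n) := mem_dyadicI_blk N n

variable (a : ℤ → ℝ) (lam : ℝ) (Nmax : ℕ)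

/-- the defining averaging property -/
def AvgGt (N : ℕ) (j : ℤ) : Prop := lam * 2 ^ N < ∑ k ∈ dyadicI N j, |a k|

noncomputable def lev (n : ℤ) : ℕ :=
  Nat.findGreatest (fun N => 0 < N ∧ AvgGt a lam N (blk N n)) Nmax

noncomputable def Ifn (n : ℤ) : Finset ℤ := dyadicI (lev a lam Nmax n) (blk (lev a lam Nmax n) n)

variable {a lam Nmax}
variable (hlam : 0 < lam)
  (hM : ∀ N j, 0 < N → AvgGt a lam N j → N ≤ Nmax)

include hM in
/-- point-maximality of lev -/
lemma le_lev {n : ℤ} {N : ℕ} {j : ℤ} (hN : 0 < N) (hmem : n ∈ dyadicI N j)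
    (hav : AvgGt a lam N j) : N ≤ lev a lam Nmax n := by
  have hj : j = blk N n := dyadicI_eq_of_mem hmem (mem_blk N n)
  unfold lev
  exact Nat.le_findGreatest (hM N j hN hav)
    (show 0 < N ∧ AvgGt a lam N (blk N n) from ⟨hN, hj ▸ hav⟩)

include hM in
lemma lev_spec {n : ℤ} {N : ℕ} {j : ℤ} (hN : 0 < N) (hmem : n ∈ dyadicI N j)
    (hav : AvgGt a lam N j) :
    0 < lev a lam Nmax n ∧ AvgGt a lam (lev a lam Nmax n) (blk (lev a lam Nmax n) n) := by
  have hj : j = blk N n := dyadicI_eq_of_mem hmem (mem_blk N n)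
  unfold lev
  exact Nat.findGreatest_spec (P := fun N => 0 < N ∧ AvgGt a lam N (blk N n))
    (hM N j hN hav) ⟨hN, hj ▸ hav⟩

include hlam in
/-- E-membership witness extraction -/
lemma exists_witness {n : ℤ} (hn : ENNReal.ofReal lam < Md a n) :
    ∃ N j, 0 < N ∧ n ∈ dyadicI N j ∧ AvgGt a lam N j :=
  (Md_gt_iff a n hlam.le).1 hn

include hlam hM in
set_option maxHeartbeats 1000000 in
lemma Ifn_congr {n m : ℤ} (hn : ENNReal.ofReal lam < Md a n) (hm : m ∈ Ifn a lam Nmax n) :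
    Ifn a lam Nmax m = Ifn a lam Nmax n := by
  unfold Ifn at hm ⊢
  obtain ⟨N₀, j₀, hN₀, hmem₀, hav₀⟩ := exists_witness hlam hn
  obtain ⟨hpos, hav⟩ := lev_spec hM hN₀ hmem₀ hav₀
  -- lev n ≤ lev m
  have h1 : lev a lam Nmax n ≤ lev a lam Nmax m := le_lev hM hpos hm hav
  -- Ifn n ⊆ Ifn m
  have h2 : dyadicI (lev a lam Nmax n) (blk (lev a lam Nmax n) n) ⊆
      dyadicI (lev a lam Nmax m) (blk (lev a lam Nmax m) m) :=
    dyadicI_subset h1 hm (mem_blk _ m)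
  have hnm : n ∈ dyadicI (lev a lam Nmax m) (blk (lev a lam Nmax m) m) := h2 (mem_blk _ n)
  -- need AvgGt for Ifn m
  have hspecm := lev_spec hM hpos hm hav
  have hposm : 0 < lev a lam Nmax m := hspecm.1
  have havm : AvgGt a lam (lev a lam Nmax m) (blk (lev a lam Nmax m) m) := hspecm.2
  have h3 : lev a lam Nmax m ≤ lev a lam Nmax n := le_lev hM hposm hnm havm
  have hlev : lev a lam Nmax m = lev a lam Nmax n := le_antisymm h3 h1
  rw [hlev]
  congr 1
  exact dyadicI_eq_of_mem (hlev ▸ mem_blk (lev a lam Nmax m) m) hm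

include hlam hM in
lemma Ifn_mem_E {n m : ℤ} (hn : ENNReal.ofReal lam < Md a n) (hm : m ∈ Ifn a lam Nmax n) :
    ENNReal.ofReal lam < Md a m := by
  unfold Ifn at hm
  obtain ⟨N₀, j₀, hN₀, hmem₀, hav₀⟩ := exists_witness hlam hn
  obtain ⟨hpos, hav⟩ := lev_spec hM hN₀ hmem₀ hav₀
  exact Md_gt_of hlam.le hpos hm hav

include hlam hM in
lemma core (hE : ({n : ℤ | ENNReal.ofReal lam < Md a n}).Finite) :
    ∃ 𝓘 : Finset (Finset ℤ),
      (∀ I ∈ 𝓘, ∃ N j, 0 < N ∧ I = dyadicI N j ∧ AvgGt a lam N j) ∧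
      (∀ I ∈ 𝓘, ∀ J ∈ 𝓘, I ≠ J → Disjoint I J) ∧
      hE.toFinset = 𝓘.biUnion id ∧
      (∀ I ∈ 𝓘, ∀ N' j', 0 < N' → I ⊆ dyadicI N' j' → AvgGt a lam N' j' →
        dyadicI N' j' = I) := by
  classical
  refine ⟨hE.toFinset.image (Ifn a lam Nmax), ?_, ?_, ?_, ?_⟩
  · intro I hI
    obtain ⟨n, hn, rfl⟩ := Finset.mem_image.1 hI
    rw [Set.Finite.mem_toFinset] at hn
    obtain ⟨N₀, j₀, hN₀, hmem₀, hav₀⟩ := exists_witness hlam hn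
    obtain ⟨hpos, hav⟩ := lev_spec hM hN₀ hmem₀ hav₀
    exact ⟨_, _, hpos, rfl, hav⟩

  · intro I hI J hJ hIJ
    obtain ⟨n, hn, rfl⟩ := Finset.mem_image.1 hI
    obtain ⟨n', hn', rfl⟩ := Finset.mem_image.1 hJ
    rw [Set.Finite.mem_toFinset] at hn hn'
    rw [Finset.disjoint_left]
    intro m hmI hmJ
    exact hIJ (by rw [← Ifn_congr hlam hM hn hmI, ← Ifn_congr hlam hM hn' hmJ])
  · ext m
    simp only [Finset.mem_biUnion, id]
    constructor
    · intro hm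
      exact ⟨Ifn a lam Nmax m, Finset.mem_image_of_mem _ hm, mem_blk _ m⟩
    · rintro ⟨I, hI, hmI⟩
      obtain ⟨n, hn, rfl⟩ := Finset.mem_image.1 hI
      rw [Set.Finite.mem_toFinset] at hn ⊢
      exact Ifn_mem_E hlam hM hn hmI
  · intro I hI N' j' hN' hsub hav'
    obtain ⟨n, hn, rfl⟩ := Finset.mem_image.1 hI
    rw [Set.Finite.mem_toFinset] at hn
    obtain ⟨N₀, j₀, hN₀, hmem₀, hav₀⟩ := exists_witness hlam hn
    obtain ⟨hpos, hav⟩ := lev_spec hM hN₀ hmem₀ hav₀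
    have hmem' : n ∈ dyadicI N' j' := hsub (mem_blk _ n)
    have h1 : N' ≤ lev a lam Nmax n := le_lev hM hN' hmem' hav'
    have h2 : lev a lam Nmax n ≤ N' := by
      have hc := Finset.card_le_card hsub
      unfold Ifn at hc
      rw [dyadicI_card, dyadicI_card] at hc
      exact (pow_le_pow_iff_right₀ (by norm_num)).1 hc
    have hlev : N' = lev a lam Nmax n := le_antisymm h1 h2
    unfold Ifn
    subst hlev
    congr 1
    exact dyadicI_eq_of_mem hmem' (mem_blk _ n)

end Core

section Fin

variable {a : ℤ → ℝ} {lam : ℝ} {Nmax : ℕ}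

lemma exists_big {lam : ℝ} {a : ℤ → ℝ} {N : ℕ} {j : ℤ} (hav : AvgGt a lam N j) :
    ∃ k ∈ dyadicI N j, lam < |a k| := by
  by_contra hcon
  push_neg at hcon
  have h1 : ∑ k ∈ dyadicI N j, |a k| ≤ ∑ _k ∈ dyadicI N j, lam :=
    Finset.sum_le_sum fun k hk => hcon k hk
  rw [Finset.sum_const, dyadicI_card, nsmul_eq_mul] at h1
  unfold AvgGt at hav
  push_cast at h1
  nlinarith [hav]

lemma E_finite (hlam : 0 < lam)
    (hM : ∀ N j, 0 < N → AvgGt a lam N j → N ≤ Nmax)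
    (hK : ({k : ℤ | lam < |a k|}).Finite) :
    ({n : ℤ | ENNReal.ofReal lam < Md a n}).Finite := by
  have hsub : {n : ℤ | ENNReal.ofReal lam < Md a n} ⊆
      ⋃ k ∈ hK.toFinset, Set.Icc (k - 2 ^ Nmax) (k + 2 ^ Nmax) := by
    intro n hn
    obtain ⟨N, j, hN, hmem, hav⟩ := (Md_gt_iff a n hlam.le).1 hn
    obtain ⟨k, hk, hbig⟩ := exists_big hav
    simp only [Set.mem_iUnion]
    refine ⟨k, by simp [Set.Finite.mem_toFinset, hbig], ?_⟩
    rw [mem_dyadicI] at hmem hk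
    have hpow : (2:ℤ) ^ N ≤ 2 ^ Nmax := pow_le_pow_right₀ (by norm_num) (hM N j hN hav)
    have hid : j * 2 ^ N = (j - 1) * 2 ^ N + 2 ^ N := by ring
    constructor <;> omega
  exact Set.Finite.subset (Set.Finite.biUnion (Set.finite_mem_finset _)
    (fun k _ => Set.finite_Icc _ _)) hsub

lemma pointwise_bound {x t p : ℝ} (hx : 0 ≤ x) (ht : 0 < t) (hp : 1 ≤ p) :
    x ≤ t + x ^ p * t ^ (1 - p) := by
  rcases le_or_gt x t with h | h
  · have : 0 ≤ x ^ p * t ^ (1 - p) := by positivity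
    linarith
  · have hx0 : 0 < x := ht.trans h
    have h1 : x ^ (1 - p) ≤ t ^ (1 - p) :=
      Real.rpow_le_rpow_of_nonpos ht h.le (by linarith)
    have h2 : x = x ^ p * x ^ (1 - p) := by
      rw [← Real.rpow_add hx0]
      norm_num
    have h3 : 0 ≤ x ^ p := Real.rpow_nonneg hx p
    nlinarith [mul_le_mul_of_nonneg_left h1 h3]
  
end Fin

section Per

lemma per {a : ℤ → ℝ} {lam γ : ℝ} (hlam : 0 < lam) (hγ : 0 < γ)
    {N : ℕ} {j : ℤ} (hN : 0 < N)
    (hmax : ∀ N' j', 0 < N' → dyadicI N j ⊆ dyadicI N' j' → AvgGt a lam N' j' →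
      dyadicI N' j' = dyadicI N j)
    {n₀ : ℤ} (hn₀ : n₀ ∈ dyadicI N j)
    (hsh : Msharp a n₀ ≤ ENNReal.ofReal (γ * lam)) :
    (((dyadicI N j).filter (fun n => ENNReal.ofReal (2 * lam) < Md a n)).card : ℝ) ≤
      2 * γ * (dyadicI N j).card := by
  set Ip := dyadicI (N + 1) (blk (N + 1) n₀) with hIpdef
  have hsubIp : dyadicI N j ⊆ Ip := dyadicI_subset (Nat.le_succ N) hn₀ (mem_blk _ _)
  have hIpcard : (Ip.card : ℝ) = 2 ^ (N + 1) := card_real _ _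
  have hpow : (0:ℝ) < 2 ^ (N+1) := by positivity
  have hpowN : (0:ℝ) < 2 ^ N := by positivity
  have h1 : ∑ k ∈ Ip, |a k| ≤ lam * 2 ^ (N + 1) := by
    by_contra hcon
    push_neg at hcon
    have heq := hmax (N + 1) (blk (N + 1) n₀) (Nat.succ_pos N) hsubIp hcon
    have hcards := congrArg Finset.card heq
    rw [dyadicI_card, dyadicI_card] at hcards
    have hlt : (2:ℕ) ^ N < 2 ^ (N + 1) := by
      exact pow_lt_pow_right₀ (by norm_num) (Nat.lt_succ_self N)
    exact absurd hcards (Nat.ne_of_gt hlt)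
  set c := avgI a Ip with hcdef
  have h2 : |c| ≤ lam := by
    have habs : |∑ k ∈ Ip, a k| ≤ ∑ k ∈ Ip, |a k| := Finset.abs_sum_le_sum_abs _ _
    have hc : c = (∑ k ∈ Ip, a k) / Ip.card := rfl
    rw [hc, abs_div, abs_of_nonneg (by positivity : (0:ℝ) ≤ (Ip.card : ℝ)), hIpcard,
      div_le_iff₀ hpow]
    linarith
  have h3 : ∑ k ∈ Ip, |a k - c| ≤ γ * lam * 2 ^ (N + 1) := by
    have hb := Msharp_bound (dyadicI_isInterval _ _) (hsubIp hn₀)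
      (mul_nonneg hγ.le hlam.le) hsh
    rw [hIpcard] at hb
    exact hb
  set b := fun k => if k ∈ Ip then a k - c else 0 with hbdef
  set S := γ * lam * 2 ^ (N + 1) with hSdef
  have hbS : ∀ F : Finset ℤ, ∑ k ∈ F, |b k| ≤ S := by
    intro F
    have e1 : ∑ k ∈ F, |b k| = ∑ k ∈ F.filter (· ∈ Ip), |a k - c| := by
      rw [Finset.sum_filter]
      refine Finset.sum_congr rfl fun k _ => ?_
      by_cases hk : k ∈ Ip <;> simp [hbdef, hk]
    rw [e1]
    refine le_trans (Finset.sum_le_sum_of_subset_of_nonneg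
      (fun x hx => (Finset.mem_filter.1 hx).2) (fun k _ _ => abs_nonneg _)) h3
  set Nb := Nat.ceil (S / lam) with hNbdef
  have hMb : ∀ N' j', 0 < N' → AvgGt b lam N' j' → N' ≤ Nb := by
    intro N' j' hN' hav
    unfold AvgGt at hav
    have h4 : lam * 2 ^ N' < S := lt_of_lt_of_le hav (hbS _)
    have h5 : ((2 ^ N' : ℕ) : ℝ) ≤ (Nb : ℝ) := by
      have : (2 ^ N' : ℝ) ≤ S / lam := by
        rw [le_div_iff₀ hlam]
        linarith [mul_comm lam ((2:ℝ) ^ N')]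
      push_cast
      exact this.trans (Nat.le_ceil _)
    have h7 : (2 ^ N' : ℕ) ≤ Nb := by exact_mod_cast h5
    exact le_trans (Nat.lt_two_pow_self (n := N')).le h7
  have hKb : ({k : ℤ | lam < |b k|}).Finite := by
    refine Set.Finite.subset Ip.finite_toSet fun k hk => ?_
    by_contra hkIp
    simp only [Finset.mem_coe] at hkIp
    have hb0 : b k = 0 := by rw [hbdef]; simp [hkIp]
    rw [Set.mem_setOf_eq, hb0, abs_zero] at hk
    linarith
  have hEb := E_finite hlam hMb hKb
  obtain ⟨𝓘b, hprop, hdisj, hcover, -⟩ := core hlam hMb hEb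
  have hss : (dyadicI N j).filter (fun n => ENNReal.ofReal (2 * lam) < Md a n) ⊆
      hEb.toFinset := by
    intro n hn
    rw [Finset.mem_filter] at hn
    obtain ⟨hnI, hnMd⟩ := hn
    rw [Set.Finite.mem_toFinset]
    obtain ⟨N', j', hN', hmemJ, havJ⟩ := (Md_gt_iff a n (by positivity)).1 hnMd
    have hpowN' : (0:ℝ) < 2 ^ N' := by positivity
    have hJI : dyadicI N' j' ⊆ dyadicI N j := by
      rcases le_total N' N with hle | hle
      · exact dyadicI_subset hle hmemJ hnI
      · have hIJ : dyadicI N j ⊆ dyadicI N' j' := dyadicI_subset hle hnI hmemJ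
        have heq : dyadicI N' j' = dyadicI N j := by
          refine hmax N' j' hN' hIJ ?_
          unfold AvgGt
          nlinarith
        rw [heq]
    have hsum : lam * 2 ^ N' < ∑ k ∈ dyadicI N' j', |b k| := by
      have e2 : ∑ k ∈ dyadicI N' j', |b k| = ∑ k ∈ dyadicI N' j', |a k - c| := by
        refine Finset.sum_congr rfl fun k hk => ?_
        rw [hbdef]
        simp only [if_pos (hsubIp (hJI hk))]
      have e3 : ∑ k ∈ dyadicI N' j', (|a k| - |c|) ≤ ∑ k ∈ dyadicI N' j', |a k - c| :=
        Finset.sum_le_sum fun k _ => abs_sub_abs_le_abs_sub (a k) c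
      have e4 : ∑ k ∈ dyadicI N' j', (|a k| - |c|) =
          (∑ k ∈ dyadicI N' j', |a k|) - |c| * 2 ^ N' := by
        rw [Finset.sum_sub_distrib, Finset.sum_const, dyadicI_card, nsmul_eq_mul]
        push_cast
        ring
      rw [e2]
      nlinarith
    exact Md_gt_of hlam.le hN' hmemJ hsum
  have hcard1 : ((hEb.toFinset.card : ℝ)) * lam ≤ S := by
    rw [hcover, show (𝓘b.biUnion id).card = ∑ I ∈ 𝓘b, I.card from Finset.card_biUnion hdisj]
    have hterm : ∀ I ∈ 𝓘b, (I.card : ℝ) * lam ≤ ∑ k ∈ I, |b k| := by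
      intro I hI
      obtain ⟨N', j', hN', rfl, hav⟩ := hprop I hI
      rw [card_real]
      unfold AvgGt at hav
      linarith [mul_comm lam ((2:ℝ) ^ N')]
    have hpd : Set.PairwiseDisjoint (↑𝓘b) (id : Finset ℤ → Finset ℤ) :=
      fun I hI J hJ hne => hdisj I hI J hJ hne
    calc ((∑ I ∈ 𝓘b, I.card : ℕ) : ℝ) * lam = ∑ I ∈ 𝓘b, ((I.card : ℝ) * lam) := by
          push_cast
          rw [Finset.sum_mul]
      _ ≤ ∑ I ∈ 𝓘b, ∑ k ∈ I, |b k| := Finset.sum_le_sum hterm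
      _ = ∑ k ∈ 𝓘b.biUnion id, |b k| := (Finset.sum_biUnion hpd).symm
      _ ≤ S := hbS _
  have hfil : (((dyadicI N j).filter (fun n => ENNReal.ofReal (2 * lam) < Md a n)).card : ℝ)
      ≤ (hEb.toFinset.card : ℝ) := by
    exact_mod_cast Finset.card_le_card hss
  have hfin : (hEb.toFinset.card : ℝ) ≤ γ * 2 ^ (N + 1) := by
    rw [hSdef] at hcard1
    nlinarith
  rw [card_real]
  have : γ * 2 ^ (N + 1) = 2 * γ * 2 ^ N := by ring
  linarith

end Per

section Main

lemma levels_bounded {a : ℤ → ℝ} {p : ℝ} (hp : 1 ≤ p)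
    (hsum : Summable fun m : ℤ => |a m| ^ p) {lam : ℝ} (hlam : 0 < lam) :
    ∃ Nb : ℕ, ∀ N j, 0 < N → AvgGt a lam N j → N ≤ Nb := by
  set t := lam / 2 with htdef
  have ht : 0 < t := by rw [htdef]; linarith
  set T := ∑' m : ℤ, |a m| ^ p with hTdef
  have hT : 0 ≤ T := tsum_nonneg fun m => Real.rpow_nonneg (abs_nonneg _) p
  refine ⟨Nat.ceil ((t ^ (1 - p) * T) / t), fun N j hN hav => ?_⟩
  unfold AvgGt at hav
  have hpt : ∑ k ∈ dyadicI N j, |a k| ≤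
      ∑ k ∈ dyadicI N j, (t + |a k| ^ p * t ^ (1 - p)) :=
    Finset.sum_le_sum fun k _ => pointwise_bound (abs_nonneg _) ht hp
  have hsplit : ∑ k ∈ dyadicI N j, (t + |a k| ^ p * t ^ (1 - p)) =
      t * 2 ^ N + t ^ (1 - p) * ∑ k ∈ dyadicI N j, |a k| ^ p := by
    rw [Finset.sum_add_distrib, Finset.sum_const, dyadicI_card, nsmul_eq_mul,
      ← Finset.sum_mul]
    push_cast
    ring
  have hle : ∑ k ∈ dyadicI N j, |a k| ^ p ≤ T :=
    hsum.sum_le_tsum _ (fun k _ => Real.rpow_nonneg (abs_nonneg _) p)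
  have hrp : 0 ≤ t ^ (1 - p) := Real.rpow_nonneg ht.le _
  have h5 : t * 2 ^ N < t ^ (1 - p) * T := by
    have hlam2 : lam = 2 * t := by rw [htdef]; ring
    nlinarith [pow_pos (show (0:ℝ) < 2 by norm_num) N, mul_le_mul_of_nonneg_left hle hrp]
  have h6 : ((2 ^ N : ℕ) : ℝ) ≤ (Nat.ceil ((t ^ (1 - p) * T) / t) : ℝ) := by
    have : (2 ^ N : ℝ) ≤ (t ^ (1 - p) * T) / t := by
      rw [le_div_iff₀ ht]
      nlinarith
    push_cast
    exact this.trans (Nat.le_ceil _)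
  have h7 : (2 ^ N : ℕ) ≤ Nat.ceil ((t ^ (1 - p) * T) / t) := by exact_mod_cast h6
  exact le_trans (Nat.lt_two_pow_self (n := N)).le h7

lemma abs_finite {a : ℤ → ℝ} {p : ℝ} (hp : 1 ≤ p)
    (hsum : Summable fun m : ℤ => |a m| ^ p) {lam : ℝ} (hlam : 0 < lam) :
    ({k : ℤ | lam < |a k|}).Finite := by
  have h0 : (0:ℝ) < lam ^ p := Real.rpow_pos_of_pos hlam p
  have hev : ∀ᶠ k in Filter.cofinite, |a k| ^ p < lam ^ p :=
    hsum.tendsto_cofinite_zero.eventually_lt_const h0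
  refine (Filter.eventually_cofinite.1 hev).subset fun k hk => ?_
  rw [Set.mem_setOf_eq] at hk ⊢
  intro hcon
  exact absurd hcon (not_lt.2 (Real.rpow_le_rpow hlam.le hk.le (by linarith)))

end Main


/-- Good-λ inequality relating the dyadic and sharp maximal operators. -/
theorem statement6 :
    ∃ C : ℝ, 0 < C ∧
      ∀ (a : ℤ → ℝ) (p₀ : ℝ), 1 ≤ p₀ → (Summable fun m : ℤ => |a m| ^ p₀) →
        ∀ γ : ℝ, 0 < γ → ∀ lam : ℝ, 0 < lam →
          Measure.count {n : ℤ | ENNReal.ofReal (2 * lam) < Md a n ∧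
              Msharp a n ≤ ENNReal.ofReal (γ * lam)} ≤
            ENNReal.ofReal (C * γ) *
              Measure.count {n : ℤ | ENNReal.ofReal lam < Md a n} := by
  classical
  refine ⟨2, by norm_num, ?_⟩
  intro a p₀ hp hsum γ hγ lam hlam
  obtain ⟨Na, hMa⟩ := levels_bounded hp hsum hlam
  have hK := abs_finite hp hsum hlam
  have hE : ({n : ℤ | ENNReal.ofReal lam < Md a n}).Finite := E_finite hlam hMa hK
  have hEbadsub : {n : ℤ | ENNReal.ofReal (2 * lam) < Md a n ∧
      Msharp a n ≤ ENNReal.ofReal (γ * lam)} ⊆ {n : ℤ | ENNReal.ofReal lam < Md a n} :=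
    fun n hn => lt_of_le_of_lt (ENNReal.ofReal_le_ofReal (by linarith)) hn.1
  have hEbad : ({n : ℤ | ENNReal.ofReal (2 * lam) < Md a n ∧
      Msharp a n ≤ ENNReal.ofReal (γ * lam)}).Finite := hE.subset hEbadsub
  rw [Measure.count_apply_finite _ hEbad, Measure.count_apply_finite _ hE]
  obtain ⟨𝓘, hprop, hdisj, hcover, hmax⟩ := core hlam hMa hE
  have key : (hEbad.toFinset.card : ℝ) ≤ 2 * γ * (hE.toFinset.card : ℝ) := by
    have hsplit : hEbad.toFinset =
        𝓘.biUnion (fun I => I.filter (fun n => n ∈ hEbad.toFinset)) := by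
      ext m
      simp only [Finset.mem_biUnion, Finset.mem_filter]
      constructor
      · intro hm
        have hmE : m ∈ hE.toFinset := by
          rw [Set.Finite.mem_toFinset] at hm ⊢
          exact hEbadsub hm
        rw [hcover, Finset.mem_biUnion] at hmE
        obtain ⟨I, hI, hmI⟩ := hmE
        exact ⟨I, hI, hmI, hm⟩
      · rintro ⟨I, _, _, hm⟩
        exact hm
    have hdisj2 : ∀ I ∈ 𝓘, ∀ J ∈ 𝓘, I ≠ J →
        Disjoint (I.filter (fun n => n ∈ hEbad.toFinset))
          (J.filter (fun n => n ∈ hEbad.toFinset)) :=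
      fun I hI J hJ hne =>
        (hdisj I hI J hJ hne).mono (Finset.filter_subset _ _) (Finset.filter_subset _ _)
    have hcards : hEbad.toFinset.card =
        ∑ I ∈ 𝓘, (I.filter (fun n => n ∈ hEbad.toFinset)).card := by
      conv_lhs => rw [hsplit]
      exact Finset.card_biUnion hdisj2
    have hper : ∀ I ∈ 𝓘, ((I.filter (fun n => n ∈ hEbad.toFinset)).card : ℝ) ≤
        2 * γ * (I.card : ℝ) := by
      intro I hI
      obtain ⟨N, j, hN, rfl, hav⟩ := hprop I hI
      rcases Finset.eq_empty_or_nonempty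
          ((dyadicI N j).filter (fun n => n ∈ hEbad.toFinset)) with he | ⟨n₀, hn₀⟩
      · rw [he]
        rw [Finset.card_empty, Nat.cast_zero]
        exact mul_nonneg (by linarith) (Nat.cast_nonneg _)
      · rw [Finset.mem_filter] at hn₀
        obtain ⟨hn₀I, hn₀bad⟩ := hn₀
        rw [Set.Finite.mem_toFinset] at hn₀bad
        have hple := per hlam hγ hN (fun N' j' h1 h2 h3 => hmax _ hI N' j' h1 h2 h3)
          hn₀I hn₀bad.2
        have hsub2 : (dyadicI N j).filter (fun n => n ∈ hEbad.toFinset) ⊆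
            (dyadicI N j).filter (fun n => ENNReal.ofReal (2 * lam) < Md a n) := by
          intro x hx
          rw [Finset.mem_filter] at hx ⊢
          refine ⟨hx.1, ?_⟩
          have := hx.2
          rw [Set.Finite.mem_toFinset] at this
          exact this.1
        have hc2 : (((dyadicI N j).filter (fun n => n ∈ hEbad.toFinset)).card : ℝ) ≤
            (((dyadicI N j).filter
              (fun n => ENNReal.ofReal (2 * lam) < Md a n)).card : ℝ) := by
          exact_mod_cast Finset.card_le_card hsub2
        exact hc2.trans hple
    have hcE : (hE.toFinset.card : ℝ) = ∑ I ∈ 𝓘, (I.card : ℝ) := by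
      rw [hcover, show (𝓘.biUnion id).card = ∑ I ∈ 𝓘, I.card from Finset.card_biUnion hdisj]
      push_cast
      rfl
    calc (hEbad.toFinset.card : ℝ)
        = ∑ I ∈ 𝓘, ((I.filter (fun n => n ∈ hEbad.toFinset)).card : ℝ) := by
          rw [hcards]; push_cast; rfl
      _ ≤ ∑ I ∈ 𝓘, 2 * γ * (I.card : ℝ) := Finset.sum_le_sum hper
      _ = 2 * γ * ∑ I ∈ 𝓘, (I.card : ℝ) := by rw [Finset.mul_sum]
      _ = 2 * γ * (hE.toFinset.card : ℝ) := by rw [hcE]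
  calc (hEbad.toFinset.card : ℝ≥0∞)
      = ENNReal.ofReal ((hEbad.toFinset.card : ℝ)) := by
        rw [ENNReal.ofReal_natCast]
    _ ≤ ENNReal.ofReal (2 * γ * (hE.toFinset.card : ℝ)) := ENNReal.ofReal_le_ofReal key
    _ = ENNReal.ofReal (2 * γ) * (hE.toFinset.card : ℝ≥0∞) := by
        rw [ENNReal.ofReal_mul (by positivity), ENNReal.ofReal_natCast]
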